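/- arXiv:2007.01891 — 8 statements merged into one kernel-verified Lean document; each statement's English description precedes it below -/
import Mathlib

section
/- For a finite episodic MDP, the maximum over q ∈ Δ(P) of the linear objective Σ_{h=1}^H Σ_{x,a,x'} q_h(x,a,x') r(x,a) equals Σ_{x∈S} α(x) V*_1(x), where V* is the optimal value function. In particular the linear program over the polytope Δ(P) attains the optimal expected total reward. -/
open Finset

private lemma telesc (g : ℕ → ℝ) : ∀ H : ℕ,
    ∑ h ∈ Finset.Icc 1 H, (g h - g (h + 1)) = g 1 - g (H + 1)
  | 0 => by simp
  | (n + 1) => by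
    rw [Finset.sum_Icc_succ_top (by omega : 1 ≤ n + 1), telesc g n]
    ring

private noncomputable def occ {S A : Type*} [Fintype S] (α : S → ℝ) (P : S → A → S → ℝ)
    (π : ℕ → S → A) : ℕ → S → ℝ
  | 0 => α
  | (n + 1) => fun y => ∑ x, occ α P π n x * P x (π (n + 1) x) y

private lemma occ_nonneg {S A : Type*} [Fintype S] {α : S → ℝ} {P : S → A → S → ℝ}
    (π : ℕ → S → A) (hα0 : ∀ x, 0 ≤ α x) (hP0 : ∀ x a y, 0 ≤ P x a y) :
    ∀ n x, 0 ≤ occ α P π n x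
  | 0, x => hα0 x
  | (n + 1), y => Finset.sum_nonneg fun x _ =>
      mul_nonneg (occ_nonneg π hα0 hP0 n x) (hP0 _ _ _)

/-- The LP over the occupancy-measure polytope `Δ(P)` attains its maximum,
and the maximal value of the expected-reward objective equals `∑ x, α x * V*₁ x`. -/
theorem stmt_1 {S A : Type*} [Fintype S] [Fintype A] [Nonempty S] [Nonempty A]
    (H : ℕ) (hH : 1 ≤ H)
    (α : S → ℝ) (hα0 : ∀ x, 0 ≤ α x) (hα1 : ∑ x, α x = 1)
    (P : S → A → S → ℝ) (hP0 : ∀ x a y, 0 ≤ P x a y) (hP1 : ∀ x a, ∑ y, P x a y = 1)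
    (r : S → A → ℝ) (hr : ∀ x a, 0 ≤ r x a ∧ r x a ≤ 1)
    (Vstar : ℕ → S → ℝ)
    (hVtop : ∀ x, Vstar (H + 1) x = 0)
    (hVrec : ∀ h, 1 ≤ h → h ≤ H → ∀ x,
      Vstar h x = (Finset.univ : Finset A).sup' Finset.univ_nonempty
        (fun a => r x a + ∑ y, P x a y * Vstar (h + 1) y)) :
    IsGreatest
      { v : ℝ | ∃ q : ℕ → S → A → S → ℝ,
          (∀ h, 1 ≤ h → h ≤ H → ∀ x a x', 0 ≤ q h x a x') ∧
          (∀ x, ∑ a, ∑ x', q 1 x a x' = α x) ∧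
          (∀ h, 2 ≤ h → h ≤ H → ∀ x,
            ∑ a, ∑ x', q h x a x' = ∑ xm, ∑ a, q (h - 1) xm a x) ∧
          (∀ h, 1 ≤ h → h ≤ H → ∀ x a x',
            q h x a x' = P x a x' * ∑ y, q h x a y) ∧
          v = ∑ h ∈ Finset.Icc 1 H, ∑ x, ∑ a, ∑ x', q h x a x' * r x a }
      (∑ x, α x * Vstar 1 x) := by
  classical
  -- choose a greedy policy
  have hpi : ∀ h x, ∃ a : A, (1 ≤ h → h ≤ H →
      Vstar h x = r x a + ∑ y, P x a y * Vstar (h + 1) y) := by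
    intro h x
    by_cases hc : 1 ≤ h ∧ h ≤ H
    · obtain ⟨a, -, ha⟩ := Finset.exists_mem_eq_sup' (Finset.univ_nonempty (α := A))
        (fun a => r x a + ∑ y, P x a y * Vstar (h + 1) y)
      exact ⟨a, fun h1 h2 => (hVrec h h1 h2 x).trans ha⟩
    · exact ⟨Classical.arbitrary A, fun h1 h2 => absurd ⟨h1, h2⟩ hc⟩
  choose π hπ using hpi
  constructor
  · -- membership: the occupancy measure of the greedy policy
    refine ⟨fun h x a x' => (if a = π h x then occ α P π (h - 1) x else 0) * P x a x',
      ?_, ?_, ?_, ?_, ?_⟩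
    · intro h _ _ x a x'
      dsimp only
      refine mul_nonneg ?_ (hP0 _ _ _)
      split_ifs
      · exact occ_nonneg π hα0 hP0 _ x
      · exact le_rfl
    · intro x
      dsimp only
      have key : ∀ a : A, ∑ x', (if a = π 1 x then occ α P π (1 - 1) x else 0) * P x a x'
          = if a = π 1 x then occ α P π (1 - 1) x else 0 := fun a => by
        rw [← Finset.mul_sum, hP1, mul_one]
      rw [Finset.sum_congr rfl fun a _ => key a]
      simp [Finset.sum_ite_eq', occ]
    · intro h h2 hH' x
      dsimp only
      obtain ⟨k, rfl⟩ : ∃ k, h = k + 2 := ⟨h - 2, by omega⟩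
      simp only [Nat.add_sub_cancel, show k + 2 - 1 = k + 1 from rfl, show k + 1 - 1 = k from rfl]
      have key : ∀ a : A, ∑ x', (if a = π (k + 2) x then occ α P π (k + 1) x else 0) * P x a x'
          = if a = π (k + 2) x then occ α P π (k + 1) x else 0 := fun a => by
        rw [← Finset.mul_sum, hP1, mul_one]
      rw [Finset.sum_congr rfl fun a _ => key a]
      have hR : ∀ xm : S, ∑ a, (if a = π (k + 1) xm then occ α P π k xm else 0) * P xm a x
          = occ α P π k xm * P xm (π (k + 1) xm) x := fun xm => by
        simp [ite_mul, Finset.sum_ite_eq']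
      rw [Finset.sum_congr rfl fun xm _ => hR xm]
      simp [Finset.sum_ite_eq', occ]
    · intro h _ _ x a x'
      dsimp only
      rw [← Finset.mul_sum, hP1, mul_one]
      exact (mul_comm _ _)
    · dsimp only
      have key2 : ∀ (m : ℕ) (x : S),
          ∑ a, ∑ x', ((if a = π m x then occ α P π (m - 1) x else 0) * P x a x') * r x a
          = occ α P π (m - 1) x * r x (π m x) := by
        intro m x
        have e : ∀ a : A, ∑ x', ((if a = π m x then occ α P π (m - 1) x else 0) * P x a x') * r x a
            = if a = π m x then occ α P π (m - 1) x * r x a else 0 := fun a => by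
          have e' : ∀ x', ((if a = π m x then occ α P π (m - 1) x else 0) * P x a x') * r x a
              = (if a = π m x then occ α P π (m - 1) x * r x a else 0) * P x a x' := by
            intro x'; split_ifs <;> ring
          rw [Finset.sum_congr rfl fun x' _ => e' x', ← Finset.mul_sum, hP1, mul_one]
        rw [Finset.sum_congr rfl fun a _ => e a]
        simp [Finset.sum_ite_eq']
      set W : ℕ → ℝ := fun h => ∑ x, occ α P π (h - 1) x * Vstar h x with hW
      have step : ∀ h ∈ Finset.Icc 1 H,
          ∑ x, ∑ a, ∑ x', ((if a = π h x then occ α P π (h - 1) x else 0) * P x a x') * r x a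
          = W h - W (h + 1) := by
        intro h hh
        obtain ⟨h1, h2⟩ := Finset.mem_Icc.mp hh
        obtain ⟨k, rfl⟩ : ∃ k, h = k + 1 := ⟨h - 1, by omega⟩
        rw [Finset.sum_congr rfl fun x _ => key2 (k + 1) x]
        simp only [hW, Nat.add_sub_cancel]
        have e1 : ∀ x : S, occ α P π k x * Vstar (k + 1) x
            = occ α P π k x * r x (π (k + 1) x)
              + ∑ y, occ α P π k x * (P x (π (k + 1) x) y * Vstar (k + 2) y) := by
          intro x
          rw [hπ (k + 1) x h1 h2, mul_add, Finset.mul_sum]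
        rw [Finset.sum_congr rfl fun x _ => e1 x, Finset.sum_add_distrib, Finset.sum_comm]
        have e2 : ∀ y : S, occ α P π (k + 1) y * Vstar (k + 2) y
            = ∑ x, occ α P π k x * (P x (π (k + 1) x) y * Vstar (k + 2) y) := by
          intro y
          rw [show (occ α P π (k + 1) y) = ∑ x, occ α P π k x * P x (π (k + 1) x) y from rfl,
            Finset.sum_mul]
          exact Finset.sum_congr rfl fun x _ => by ring
        rw [Finset.sum_congr rfl fun y (_ : y ∈ Finset.univ) => (e2 y).symm]
        ring
      rw [Finset.sum_congr rfl step, telesc W H]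
      have hW1 : W 1 = ∑ x, α x * Vstar 1 x := by
        simp [hW, occ]
      have hWH : W (H + 1) = 0 := by
        simp [hW, hVtop]
      rw [hW1, hWH, sub_zero]
  · -- upper bound
    rintro v ⟨q, hq0, hq1, hflow, hprop, rfl⟩
    set E : ℕ → ℝ := fun h => ∑ x, (∑ a, ∑ x', q h x a x') * Vstar h x with hE
    have hstep : ∀ h ∈ Finset.Icc 1 H,
        ∑ x, ∑ a, ∑ x', q h x a x' * r x a ≤ E h - E (h + 1) := by
      intro h hh
      obtain ⟨h1, h2⟩ := Finset.mem_Icc.mp hh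
      have hrV : ∀ x a, r x a ≤ Vstar h x - ∑ y, P x a y * Vstar (h + 1) y := by
        intro x a
        have h4 : r x a + ∑ y, P x a y * Vstar (h + 1) y ≤ Vstar h x := by
          rw [hVrec h h1 h2 x]
          exact Finset.le_sup' (fun a => r x a + ∑ y, P x a y * Vstar (h + 1) y) (Finset.mem_univ a)
        linarith
      have hq0' : ∀ x a, 0 ≤ ∑ x', q h x a x' :=
        fun x a => Finset.sum_nonneg fun x' _ => hq0 h h1 h2 x a x'
      have main : ∀ (x : S) (a : A), ∑ x', q h x a x' * r x a
          ≤ (∑ x', q h x a x') * Vstar h x - ∑ y, q h x a y * Vstar (h + 1) y := by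
        intro x a
        have e2 : ∑ y, q h x a y * Vstar (h + 1) y
            = (∑ x', q h x a x') * ∑ y, P x a y * Vstar (h + 1) y := by
          rw [Finset.mul_sum]
          refine Finset.sum_congr rfl fun y _ => ?_
          rw [hprop h h1 h2 x a y]; ring
        rw [← Finset.sum_mul, e2]
        calc (∑ x', q h x a x') * r x a
            ≤ (∑ x', q h x a x') * (Vstar h x - ∑ y, P x a y * Vstar (h + 1) y) :=
              mul_le_mul_of_nonneg_left (hrV x a) (hq0' x a)
          _ = (∑ x', q h x a x') * Vstar h x
              - (∑ x', q h x a x') * ∑ y, P x a y * Vstar (h + 1) y := by ring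
      have sum_main : ∑ x, ∑ a, ∑ x', q h x a x' * r x a
          ≤ E h - ∑ y, (∑ x, ∑ a, q h x a y) * Vstar (h + 1) y := by
        have hle := Finset.sum_le_sum (s := (Finset.univ : Finset S))
          (fun x (_ : x ∈ Finset.univ) => Finset.sum_le_sum
            (fun a (_ : a ∈ Finset.univ) => main x a))
        refine hle.trans_eq ?_
        rw [Finset.sum_congr rfl fun x (_ : x ∈ Finset.univ) => Finset.sum_sub_distrib _ _,
          Finset.sum_sub_distrib]
        congr 1
        · simp only [hE]
          exact Finset.sum_congr rfl fun x _ => by rw [Finset.sum_mul]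
        · rw [Finset.sum_congr rfl fun x (_ : x ∈ Finset.univ) => Finset.sum_comm,
            Finset.sum_comm]
          refine Finset.sum_congr rfl fun y _ => ?_
          rw [Finset.sum_mul]
          refine Finset.sum_congr rfl fun x _ => ?_
          rw [Finset.sum_mul]
      have hEh1 : ∑ y, (∑ x, ∑ a, q h x a y) * Vstar (h + 1) y = E (h + 1) := by
        rcases eq_or_lt_of_le h2 with he | hlt
        · subst he
          simp [hE, hVtop]
        · have hf : ∀ y, ∑ a, ∑ x', q (h + 1) y a x' = ∑ x, ∑ a, q h x a y := by
            intro y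
            have := hflow (h + 1) (by omega) (by omega) y
            simpa using this
          simp only [hE]
          exact (Finset.sum_congr rfl fun y _ => by rw [hf y]).symm
      linarith [sum_main, hEh1]
    calc ∑ h ∈ Finset.Icc 1 H, ∑ x, ∑ a, ∑ x', q h x a x' * r x a
        ≤ ∑ h ∈ Finset.Icc 1 H, (E h - E (h + 1)) := Finset.sum_le_sum hstep
      _ = E 1 - E (H + 1) := telesc E H
      _ = ∑ x, α x * Vstar 1 x := by
          have e1 : E 1 = ∑ x, α x * Vstar 1 x := by
            simp only [hE]
            exact Finset.sum_congr rfl fun x _ => by rw [hq1 x]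
          have e2 : E (H + 1) = 0 := by simp [hE, hVtop]
          rw [e1, e2, sub_zero]
end

section
/- Fix a stage h and (q,ε) feasible for the POLP constraints at stage h, i.e. |q_h(x,a,x') − P̂(x'|x,a) Σ_y q_h(x,a,y)| ≤ ε_h(x,a,x') and Σ_y w_i(y) ε_h(x,a,y) ≤ b_i(x,a) Σ_y q_h(x,a,y) for all i ∈ I and (x,a,x'), with q_h, ε_h ≥ 0. Then for every (x,a) with Σ_y q_h(x,a,y) > 0, the induced transition probabilities P̃^q(x'|x,a) = q_h(x,a,x') / Σ_y q_h(x,a,y) satisfy Σ_{x'} w_i(x') |P̃^q(x'|x,a) − P̂(x'|x,a)| ≤ b_i(x,a) for every i ∈ I. Conversely, if P̃ is a transition function satisfying Σ_{x'} w_i(x') |P̃(x'|x,a) − P̂(x'|x,a)| ≤ b_i(x,a) for all i and (x,a), and q_h : S×A×S → ℝ≥0 satisfies q_h(x,a,x') = P̃(x'|x,a) Σ_y q_h(x,a,y) for all (x,a,x'), then setting ε_h(x,a,x') = |q_h(x,a,x') − P̂(x'|x,a) Σ_y q_h(x,a,y)| makes (q_h,ε_h) satisfy the POLP constraints at stage h.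 -/
open Finset

/-- Equivalence between the per-stage POLP constraints on `(q, ε)` and the
aggregation constraints on the induced/underlying transition function. -/
theorem stmt_3 {S A I : Type*} [Fintype S] [Fintype A] [Fintype I] [Nonempty S] [Nonempty A]
    (Phat : S → A → S → ℝ) (hPhat0 : ∀ x a y, 0 ≤ Phat x a y)
    (hPhat1 : ∀ x a, ∑ y, Phat x a y = 1)
    (w : I → S → ℝ) (hw0 : ∀ i y, 0 ≤ w i y)
    (b : I → S → A → ℝ) (hb0 : ∀ i x a, 0 ≤ b i x a) :
    -- Forward direction: feasible (q, ε) induces a transition function satisfying the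
    -- aggregation constraints wherever the total mass is positive.
    (∀ q ε : S → A → S → ℝ,
      (∀ x a x', 0 ≤ q x a x') →
      (∀ x a x', 0 ≤ ε x a x') →
      (∀ x a x', |q x a x' - Phat x a x' * ∑ y, q x a y| ≤ ε x a x') →
      (∀ i x a, ∑ y, w i y * ε x a y ≤ b i x a * ∑ y, q x a y) →
      ∀ x a, 0 < ∑ y, q x a y →
        ∀ i, ∑ x', w i x' * |q x a x' / (∑ y, q x a y) - Phat x a x'| ≤ b i x a) ∧
    -- Converse direction: a transition function satisfying the aggregation constraints
    -- together with any consistent nonnegative q yields a feasible (q, ε) with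
    -- ε x a x' = |q x a x' - P̂(x'|x,a) ∑_y q x a y|.
    (∀ Ptil : S → A → S → ℝ,
      (∀ x a y, 0 ≤ Ptil x a y) →
      (∀ x a, ∑ y, Ptil x a y = 1) →
      (∀ i x a, ∑ x', w i x' * |Ptil x a x' - Phat x a x'| ≤ b i x a) →
      ∀ q : S → A → S → ℝ,
        (∀ x a x', 0 ≤ q x a x') →
        (∀ x a x', q x a x' = Ptil x a x' * ∑ y, q x a y) →
        (∀ x a x', 0 ≤ |q x a x' - Phat x a x' * ∑ y, q x a y|) ∧
        (∀ x a x', |q x a x' - Phat x a x' * ∑ y, q x a y|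
            ≤ |q x a x' - Phat x a x' * ∑ y, q x a y|) ∧
        (∀ i x a, ∑ y, w i y * |q x a y - Phat x a y * ∑ y', q x a y'|
            ≤ b i x a * ∑ y, q x a y)) := by
  constructor
  · intro q ε hq0 hε0 habs hagg x a hQ i
    have hQne : (∑ y, q x a y) ≠ 0 := ne_of_gt hQ
    have key : ∀ x', w i x' * |q x a x' / (∑ y, q x a y) - Phat x a x'|
        = w i x' * |q x a x' - Phat x a x' * ∑ y, q x a y| / (∑ y, q x a y) := by
      intro x'
      rw [mul_div_assoc]
      congr 1
      rw [div_sub' hQne, abs_div, abs_of_pos hQ, mul_comm]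
    calc ∑ x', w i x' * |q x a x' / (∑ y, q x a y) - Phat x a x'|
        = (∑ x', w i x' * |q x a x' - Phat x a x' * ∑ y, q x a y|) / (∑ y, q x a y) := by
          rw [Finset.sum_div]; exact Finset.sum_congr rfl fun x' _ => key x'
      _ ≤ (∑ x', w i x' * ε x a x') / (∑ y, q x a y) := by
          gcongr with x' _
          · exact hw0 i x'
          · exact habs x a x'
      _ ≤ b i x a := by
          rw [div_le_iff₀ hQ]; exact hagg i x a
  · intro Ptil hP0 hP1 hagg q hq0 hqc
    refine ⟨fun x a x' => abs_nonneg _, fun x a x' => le_rfl, fun i x a => ?_⟩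
    have hQ0 : 0 ≤ ∑ y, q x a y := Finset.sum_nonneg fun y _ => hq0 x a y
    have : ∀ y, w i y * |q x a y - Phat x a y * ∑ y', q x a y'|
        = (w i y * |Ptil x a y - Phat x a y|) * ∑ y', q x a y' := by
      intro y
      rw [hqc x a y, ← sub_mul, abs_mul, abs_of_nonneg hQ0, mul_assoc]
    rw [Finset.sum_congr rfl fun y _ => this y, ← Finset.sum_mul]
    exact mul_le_mul_of_nonneg_right (hagg i x a) hQ0
end

section
/- Suppose the true transition function P satisfies all the aggregation constraints: Σ_{x'∈S} w_i(x') |P(x'|x,a) − P̂(x'|x,a)| ≤ b_i(x,a) for every i ∈ I and every (x,a) ∈ S×A. Let β* be defined by the backward recursion β*_{H+1} = 0 and β*_h(x) = max_{a∈A} [ r(x,a) + CB(x,a; β*_{h+1}) + Σ_{y∈S} P̂(y|x,a) β*_{h+1}(y) ], and let V* be the optimal value function of the MDP with transition function P and reward r. Then β*_h(x) ≥ V*_h(x) for every x ∈ S and every h = 1,…,H+1. -/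
open Finset

/-- Optimism. If the true transition function `P` satisfies all the
aggregation constraints, then the optimistic value functions `β*` dominate the optimal
value functions `V*` of the true MDP at every stage. -/
theorem stmt_6 {S A I : Type*} [Fintype S] [Fintype A] [Fintype I] [Nonempty S] [Nonempty A]
    (H : ℕ) (hH : 1 ≤ H)
    (r : S → A → ℝ) (hr : ∀ x a, 0 ≤ r x a ∧ r x a ≤ 1)
    (P : S → A → S → ℝ) (hP0 : ∀ x a y, 0 ≤ P x a y) (hP1 : ∀ x a, ∑ y, P x a y = 1)
    (Phat : S → A → S → ℝ) (hPhat0 : ∀ x a y, 0 ≤ Phat x a y)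
    (hPhat1 : ∀ x a, ∑ y, Phat x a y = 1)
    (w : I → S → ℝ) (hw0 : ∀ i y, 0 ≤ w i y) (hwpos : ∀ x' : S, ∃ i, 0 < w i x')
    (b : I → S → A → ℝ) (hb0 : ∀ i x a, 0 ≤ b i x a)
    (CB : S → A → (S → ℝ) → ℝ)
    (hCB : ∀ (x : S) (a : A) (β : S → ℝ),
      IsLeast { v : ℝ | ∃ (c : ℝ) (μ : I → ℝ), (∀ i, 0 ≤ μ i) ∧
          (∀ x', |β x' - c| ≤ ∑ i, w i x' * μ i) ∧ v = ∑ i, b i x a * μ i }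
        (CB x a β))
    -- the true transition function satisfies all the aggregation constraints:
    (hPfeas : ∀ (i : I) (x : S) (a : A),
      ∑ x', w i x' * |P x a x' - Phat x a x'| ≤ b i x a)
    (βs : ℕ → S → ℝ)
    (hβtop : ∀ x, βs (H + 1) x = 0)
    (hβrec : ∀ h, 1 ≤ h → h ≤ H → ∀ x,
      βs h x = (Finset.univ : Finset A).sup' Finset.univ_nonempty
        (fun a => r x a + CB x a (βs (h + 1)) + ∑ y, Phat x a y * βs (h + 1) y))
    (Vstar : ℕ → S → ℝ)
    (hVtop : ∀ x, Vstar (H + 1) x = 0)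
    (hVrec : ∀ h, 1 ≤ h → h ≤ H → ∀ x,
      Vstar h x = (Finset.univ : Finset A).sup' Finset.univ_nonempty
        (fun a => r x a + ∑ y, P x a y * Vstar (h + 1) y)) :
    ∀ h, 1 ≤ h → h ≤ H + 1 → ∀ x, Vstar h x ≤ βs h x := by
  -- single-step lemma
  have step : ∀ h, 1 ≤ h → h ≤ H → (∀ x, Vstar (h + 1) x ≤ βs (h + 1) x) →
      ∀ x, Vstar h x ≤ βs h x := by
    intro h h1 h2 IH x
    rw [hVrec h h1 h2 x, hβrec h h1 h2 x]
    apply Finset.sup'_le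
    intro a _
    refine le_trans ?_ (Finset.le_sup' _ (Finset.mem_univ a))
    obtain ⟨⟨c, μ, hμ0, hfeas, hval⟩, -⟩ := hCB x a (βs (h + 1))
    have hPβ : ∑ y, P x a y * Vstar (h + 1) y ≤ ∑ y, P x a y * βs (h + 1) y :=
      Finset.sum_le_sum fun y _ => mul_le_mul_of_nonneg_left (IH y) (hP0 x a y)
    have key : ∑ y, P x a y * βs (h + 1) y - ∑ y, Phat x a y * βs (h + 1) y
        ≤ CB x a (βs (h + 1)) := by
      have e1 : ∑ y, P x a y * βs (h + 1) y - ∑ y, Phat x a y * βs (h + 1) y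
          = ∑ y, (P x a y - Phat x a y) * (βs (h + 1) y - c) := by
        have := hP1 x a
        have := hPhat1 x a
        simp only [sub_mul, mul_sub, Finset.sum_sub_distrib, ← Finset.sum_mul, this,
          hP1 x a]
        ring
      rw [e1]
      calc ∑ y, (P x a y - Phat x a y) * (βs (h + 1) y - c)
          ≤ ∑ y, |P x a y - Phat x a y| * (∑ i, w i y * μ i) := by
            apply Finset.sum_le_sum
            intro y _
            calc (P x a y - Phat x a y) * (βs (h + 1) y - c)
                ≤ |(P x a y - Phat x a y) * (βs (h + 1) y - c)| := le_abs_self _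
              _ = |P x a y - Phat x a y| * |βs (h + 1) y - c| := abs_mul _ _
              _ ≤ |P x a y - Phat x a y| * (∑ i, w i y * μ i) :=
                  mul_le_mul_of_nonneg_left (hfeas y) (abs_nonneg _)
        _ = ∑ y, ∑ i, μ i * (w i y * |P x a y - Phat x a y|) := by
            apply Finset.sum_congr rfl; intro y _
            rw [Finset.mul_sum]
            apply Finset.sum_congr rfl; intro i _; ring
        _ = ∑ i, ∑ y, μ i * (w i y * |P x a y - Phat x a y|) := Finset.sum_comm
        _ = ∑ i, μ i * (∑ y, w i y * |P x a y - Phat x a y|) := by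
            apply Finset.sum_congr rfl; intro i _
            rw [Finset.mul_sum]
        _ ≤ ∑ i, μ i * b i x a := by
            apply Finset.sum_le_sum
            intro i _
            exact mul_le_mul_of_nonneg_left (hPfeas i x a) (hμ0 i)
        _ = CB x a (βs (h + 1)) := by
            rw [hval]; apply Finset.sum_congr rfl; intro i _; ring
    linarith
  -- downward induction
  have main : ∀ k, k ≤ H → ∀ x, Vstar (H + 1 - k) x ≤ βs (H + 1 - k) x := by
    intro k
    induction k with
    | zero => intro _ x; simp [hVtop x, hβtop x]
    | succ n ih =>
      intro hn x
      have h1 : 1 ≤ H + 1 - (n + 1) := by omega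
      have h2 : H + 1 - (n + 1) ≤ H := by omega
      have h3 : H + 1 - (n + 1) + 1 = H + 1 - n := by omega
      refine step _ h1 h2 ?_ x
      rw [h3]
      exact ih (by omega)
  intro h h1 h2 x
  have : h = H + 1 - (H + 1 - h) := by omega
  rw [this]
  exact main (H + 1 - h) (by omega) x
end

section
/- Let S be a finite set of cardinality S_card ≥ 1, let p̂ and p̃ be probability distributions on S, let β : S → [0,H] with H ≥ 0, let L > 0 and reals N ≥ 1, N' ≥ 1, and suppose that for every y ∈ S, |p̃(y) − p̂(y)| ≤ sqrt( 4 p̂(y)(1 − p̂(y)) L / N ) + 7L/(3N'). Then the variance of β under p̂ is bounded by the variance of β under p̃ as follows: Var_{p̂}(β) ≤ Var_{p̃}(β) + H² · sqrt( 4 S_card L / N ) + 9 H² S_card² L / N'. -/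
open Finset

private lemma var_double_aux {S : Type*} [Fintype S] (p b : S → ℝ) (hp1 : ∑ y, p y = 1) :
    ∑ y, p y * (b y - ∑ y', p y' * b y') ^ 2
      = (1/2) * ∑ y, ∑ y', p y * p y' * (b y - b y') ^ 2 := by
  have h1 : ∑ y, p y * (b y - ∑ y', p y' * b y') ^ 2
      = (∑ y, p y * b y ^ 2) - (∑ y, p y * b y) ^ 2 := by
    have e : ∀ y, p y * (b y - ∑ y', p y' * b y') ^ 2
        = p y * b y ^ 2 - 2 * (∑ y', p y' * b y') * (p y * b y)
          + (∑ y', p y' * b y') ^ 2 * p y := fun y => by ring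
    rw [Finset.sum_congr rfl (fun y _ => e y), Finset.sum_add_distrib,
      Finset.sum_sub_distrib, ← Finset.mul_sum, ← Finset.mul_sum, hp1]
    ring
  have h2 : ∑ y, ∑ y', p y * p y' * (b y - b y') ^ 2
      = 2 * ((∑ y, p y * b y ^ 2) - (∑ y, p y * b y) ^ 2) := by
    have e : ∀ y, ∑ y', p y * p y' * (b y - b y') ^ 2
        = (p y * b y ^ 2) * (∑ y', p y') - (2 * (p y * b y)) * (∑ y', p y' * b y')
          + p y * (∑ y', p y' * b y' ^ 2) := by
      intro y
      have e' : ∀ y', p y * p y' * (b y - b y') ^ 2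
          = (p y * b y ^ 2) * p y' - (2 * (p y * b y)) * (p y' * b y')
            + p y * (p y' * b y' ^ 2) := fun y' => by ring
      rw [Finset.sum_congr rfl (fun y' _ => e' y'), Finset.sum_add_distrib,
        Finset.sum_sub_distrib, ← Finset.mul_sum, ← Finset.mul_sum, ← Finset.mul_sum]
    rw [Finset.sum_congr rfl (fun y _ => e y), Finset.sum_add_distrib,
      Finset.sum_sub_distrib, ← Finset.sum_mul, ← Finset.sum_mul, ← Finset.sum_mul,
      ← Finset.mul_sum, hp1]
    ring
  rw [h1, h2]; ring

/-- If `p̃` is entrywise close to `p̂` (empirical-Bernstein widths), then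
the variance of `β` under `p̂` is bounded by the variance under `p̃` plus lower-order
correction terms. -/
theorem stmt_11 {S : Type*} [Fintype S] [Nonempty S]
    (phat ptil : S → ℝ)
    (hphat0 : ∀ y, 0 ≤ phat y) (hphat1 : ∑ y, phat y = 1)
    (hptil0 : ∀ y, 0 ≤ ptil y) (hptil1 : ∑ y, ptil y = 1)
    (H : ℝ) (hHpos : 0 ≤ H) (β : S → ℝ) (hβ : ∀ y, 0 ≤ β y ∧ β y ≤ H)
    (L N N' : ℝ) (hL : 0 < L) (hN : 1 ≤ N) (hN' : 1 ≤ N')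
    (hclose : ∀ y, |ptil y - phat y|
      ≤ Real.sqrt (4 * phat y * (1 - phat y) * L / N) + 7 * L / (3 * N')) :
    ∑ y, phat y * (β y - ∑ y', phat y' * β y') ^ 2
      ≤ (∑ y, ptil y * (β y - ∑ y', ptil y' * β y') ^ 2)
        + H ^ 2 * Real.sqrt (4 * (Fintype.card S : ℝ) * L / N)
        + 9 * H ^ 2 * (Fintype.card S : ℝ) ^ 2 * L / N' := by
  classical
  set m : ℝ := (Fintype.card S : ℝ) with hm
  have hcard1 : (1:ℝ) ≤ m := Nat.one_le_cast.mpr Fintype.card_pos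
  have hN0 : (0:ℝ) < N := lt_of_lt_of_le one_pos hN
  have hN'0 : (0:ℝ) < N' := lt_of_lt_of_le one_pos hN'
  have hphatle1 : ∀ y, phat y ≤ 1 := by
    intro y
    calc phat y ≤ ∑ y', phat y' :=
          Finset.single_le_sum (fun i _ => hphat0 i) (Finset.mem_univ y)
    _ = 1 := hphat1
  set d : S → ℝ := fun y => phat y - ptil y with hd
  set D := ∑ y, |d y| with hD
  have hD0 : 0 ≤ D := Finset.sum_nonneg fun y _ => abs_nonneg _
  -- step 1: Var_phat ≤ Var_ptil + H^2 * D
  have step1 : ∑ y, phat y * (β y - ∑ y', phat y' * β y') ^ 2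
      ≤ (∑ y, ptil y * (β y - ∑ y', ptil y' * β y') ^ 2) + H ^ 2 * D := by
    rw [var_double_aux phat β hphat1, var_double_aux ptil β hptil1]
    have hterm : ∀ y y', phat y * phat y' * (β y - β y') ^ 2
        - ptil y * ptil y' * (β y - β y') ^ 2
        ≤ (|d y| * phat y' + ptil y * |d y'|) * H ^ 2 := by
      intro y y'
      have hs0 : 0 ≤ (β y - β y') ^ 2 := sq_nonneg _
      have hsH : (β y - β y') ^ 2 ≤ H ^ 2 := by
        have h1 := hβ y; have h2 := hβ y'
        apply sq_le_sq' <;> [linarith [h1.1, h2.2]; linarith [h1.2, h2.1]]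
      have habs : |d y * phat y' + ptil y * d y'| ≤ |d y| * phat y' + ptil y * |d y'| := by
        calc |d y * phat y' + ptil y * d y'| ≤ |d y * phat y'| + |ptil y * d y'| :=
              abs_add_le _ _
        _ = |d y| * phat y' + ptil y * |d y'| := by
            rw [abs_mul, abs_mul, abs_of_nonneg (hphat0 y'), abs_of_nonneg (hptil0 y)]
      have hM0 : 0 ≤ |d y| * phat y' + ptil y * |d y'| :=
        add_nonneg (mul_nonneg (abs_nonneg _) (hphat0 y'))
          (mul_nonneg (hptil0 y) (abs_nonneg _))
      calc phat y * phat y' * (β y - β y') ^ 2 - ptil y * ptil y' * (β y - β y') ^ 2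
          = (d y * phat y' + ptil y * d y') * (β y - β y') ^ 2 := by simp only [hd]; ring
        _ ≤ |d y * phat y' + ptil y * d y'| * (β y - β y') ^ 2 :=
            mul_le_mul_of_nonneg_right (le_abs_self _) hs0
        _ ≤ (|d y| * phat y' + ptil y * |d y'|) * (β y - β y') ^ 2 :=
            mul_le_mul_of_nonneg_right habs hs0
        _ ≤ (|d y| * phat y' + ptil y * |d y'|) * H ^ 2 :=
            mul_le_mul_of_nonneg_left hsH hM0
    have hsum : (∑ y, ∑ y', phat y * phat y' * (β y - β y') ^ 2)
        - (∑ y, ∑ y', ptil y * ptil y' * (β y - β y') ^ 2)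
        ≤ ∑ y, ∑ y', (|d y| * phat y' + ptil y * |d y'|) * H ^ 2 := by
      rw [← Finset.sum_sub_distrib]
      refine Finset.sum_le_sum fun y _ => ?_
      rw [← Finset.sum_sub_distrib]
      exact Finset.sum_le_sum fun y' _ => hterm y y'
    have heval : ∑ y, ∑ y', (|d y| * phat y' + ptil y * |d y'|) * H ^ 2
        = 2 * (H ^ 2 * D) := by
      have e : ∀ y, ∑ y', (|d y| * phat y' + ptil y * |d y'|) * H ^ 2
          = |d y| * H ^ 2 + ptil y * (D * H ^ 2) := by
        intro y
        have e' : ∀ y', (|d y| * phat y' + ptil y * |d y'|) * H ^ 2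
            = (|d y| * H ^ 2) * phat y' + (ptil y * H ^ 2) * |d y'| := fun y' => by ring
        rw [Finset.sum_congr rfl (fun y' _ => e' y'), Finset.sum_add_distrib,
          ← Finset.mul_sum, ← Finset.mul_sum, hphat1, ← hD]
        ring
      rw [Finset.sum_congr rfl (fun y _ => e y), Finset.sum_add_distrib,
        ← Finset.sum_mul, ← Finset.sum_mul, hptil1, ← hD]
      ring
    rw [heval] at hsum
    linarith
  -- step 2: bound D
  have hw0 : ∀ y, (0:ℝ) ≤ 4 * phat y * (1 - phat y) * L / N := by
    intro y
    have h1 := hphat0 y; have h2 := hphatle1 y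
    have h3 : 0 ≤ 1 - phat y := by linarith
    positivity
  have step2 : D ≤ Real.sqrt (4 * m * L / N) + m * (7 * L / (3 * N')) := by
    have h1 : D ≤ (∑ y, Real.sqrt (4 * phat y * (1 - phat y) * L / N))
        + m * (7 * L / (3 * N')) := by
      have hh : D ≤ ∑ y, (Real.sqrt (4 * phat y * (1 - phat y) * L / N)
          + 7 * L / (3 * N')) := by
        refine Finset.sum_le_sum fun y _ => ?_
        rw [show |d y| = |ptil y - phat y| by rw [hd]; exact abs_sub_comm _ _]
        exact hclose y
      rw [Finset.sum_add_distrib, Finset.sum_const, nsmul_eq_mul, Finset.card_univ] at hh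
      calc D ≤ _ := hh
        _ = (∑ y, Real.sqrt (4 * phat y * (1 - phat y) * L / N))
            + m * (7 * L / (3 * N')) := by rw [hm]
    have h2 : (∑ y, Real.sqrt (4 * phat y * (1 - phat y) * L / N))
        ≤ Real.sqrt (4 * m * L / N) := by
      have hcs : (∑ y, Real.sqrt (4 * phat y * (1 - phat y) * L / N)) ^ 2
          ≤ m * ∑ y, (4 * phat y * (1 - phat y) * L / N) := by
        have hthis := sq_sum_le_card_mul_sum_sq
          (s := Finset.univ) (f := fun y => Real.sqrt (4 * phat y * (1 - phat y) * L / N))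
        simp only [Real.sq_sqrt (hw0 _)] at hthis
        calc (∑ y, Real.sqrt (4 * phat y * (1 - phat y) * L / N)) ^ 2
            ≤ (Finset.univ (α := S)).card * ∑ y, (4 * phat y * (1 - phat y) * L / N) := hthis
          _ = m * ∑ y, (4 * phat y * (1 - phat y) * L / N) := by
              rw [Finset.card_univ, hm]
      have hsum4 : (∑ y, 4 * phat y * (1 - phat y) * L / N) ≤ 4 * L / N := by
        calc (∑ y, 4 * phat y * (1 - phat y) * L / N)
            ≤ ∑ y, phat y * (4 * L / N) := by
              refine Finset.sum_le_sum fun y _ => ?_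
              have h1 := hphat0 y; have h2 := hphatle1 y
              have key : 4 * phat y * (1 - phat y) * L ≤ phat y * (4 * L) := by nlinarith [mul_nonneg (mul_nonneg h1 h1) hL.le]
              calc 4 * phat y * (1 - phat y) * L / N ≤ (phat y * (4 * L)) / N :=
                    (div_le_div_iff_of_pos_right hN0).mpr key
                _ = phat y * (4 * L / N) := by ring
          _ = 4 * L / N := by rw [← Finset.sum_mul, hphat1, one_mul]
      have hb : (∑ y, Real.sqrt (4 * phat y * (1 - phat y) * L / N)) ^ 2
          ≤ 4 * m * L / N := by
        calc (∑ y, Real.sqrt (4 * phat y * (1 - phat y) * L / N)) ^ 2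
            ≤ m * (4 * L / N) :=
              le_trans hcs (mul_le_mul_of_nonneg_left hsum4 (by linarith))
          _ = 4 * m * L / N := by ring
      have hnn : 0 ≤ ∑ y, Real.sqrt (4 * phat y * (1 - phat y) * L / N) :=
        Finset.sum_nonneg fun y _ => Real.sqrt_nonneg _
      calc (∑ y, Real.sqrt (4 * phat y * (1 - phat y) * L / N))
          = Real.sqrt ((∑ y, Real.sqrt (4 * phat y * (1 - phat y) * L / N)) ^ 2) :=
            (Real.sqrt_sq hnn).symm
        _ ≤ Real.sqrt (4 * m * L / N) := Real.sqrt_le_sqrt hb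
    linarith
  -- final assembly
  have hfinal : H ^ 2 * D
      ≤ H ^ 2 * Real.sqrt (4 * m * L / N) + 9 * H ^ 2 * m ^ 2 * L / N' := by
    have h3 : H ^ 2 * (m * (7 * L / (3 * N'))) ≤ 9 * H ^ 2 * m ^ 2 * L / N' := by
      have key : 7 / 3 * m * (H ^ 2 * L) ≤ 9 * m ^ 2 * (H ^ 2 * L) := by
        have hm2 : 7 / 3 * m ≤ 9 * m ^ 2 := by nlinarith
        exact mul_le_mul_of_nonneg_right hm2 (by positivity)
      calc H ^ 2 * (m * (7 * L / (3 * N'))) = (7 / 3 * m * (H ^ 2 * L)) / N' := by ring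
        _ ≤ (9 * m ^ 2 * (H ^ 2 * L)) / N' := (div_le_div_iff_of_pos_right hN'0).mpr key
        _ = 9 * H ^ 2 * m ^ 2 * L / N' := by ring
    have h4 := mul_le_mul_of_nonneg_left step2 (sq_nonneg H)
    rw [mul_add] at h4
    linarith
  linarith
end

section
/- Let π = (π_1,…,π_H) with π_h : S → A be a policy, P and P̂ transition functions, r : S×A → ℝ a reward, and CB_h : S×A → ℝ arbitrary functions for h = 1,…,H. Define β by β_{H+1} = 0 and β_h(x) = r(x,π_h(x)) + CB_h(x,π_h(x)) + Σ_{y∈S} P̂(y|x,π_h(x)) β_{h+1}(y), and let V^π be the value function of π under P. Let ρ_h(x'|x) denote the probability that x_h = x' when x_1 = x and the process evolves as x_{l+1} ∼ P(·|x_l, π_l(x_l)); explicitly, ρ_1(x'|x) = 1{x' = x} and ρ_{h+1}(x'|x) = Σ_z ρ_h(z|x) P(x'|z,π_h(z)). Then for every x ∈ S: β_1(x) − V^π_1(x) = Σ_{h=1}^H Σ_{x'∈S} ρ_h(x'|x) · [ CB_h(x',π_h(x')) + Σ_{y∈S} ( P̂(y|x',π_h(x')) − P(y|x',π_h(x'))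 ) β_{h+1}(y) ]. -/
open Finset

/-- Value-difference identity: the gap between the optimistic values `β`
(computed with reference model `P̂` and bonuses `CB`) and the true value `V^π` of the
policy decomposes over the stage-visit distribution `ρ`. -/
theorem stmt_15 {S A : Type*} [Fintype S] [Nonempty S] [DecidableEq S]
    (H : ℕ) (hH : 1 ≤ H)
    (π : ℕ → S → A) (P Phat : S → A → S → ℝ)
    (hP0 : ∀ x a y, 0 ≤ P x a y) (hP1 : ∀ x a, ∑ y, P x a y = 1)
    (hPhat0 : ∀ x a y, 0 ≤ Phat x a y) (hPhat1 : ∀ x a, ∑ y, Phat x a y = 1)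
    (r : S → A → ℝ) (CB : ℕ → S → A → ℝ)
    (β V : ℕ → S → ℝ)
    (hβtop : ∀ x, β (H + 1) x = 0)
    (hβ : ∀ h, 1 ≤ h → h ≤ H → ∀ x,
      β h x = r x (π h x) + CB h x (π h x)
        + ∑ y, Phat x (π h x) y * β (h + 1) y)
    (hVtop : ∀ x, V (H + 1) x = 0)
    (hV : ∀ h, 1 ≤ h → h ≤ H → ∀ x,
      V h x = r x (π h x) + ∑ y, P x (π h x) y * V (h + 1) y)
    (ρ : ℕ → S → S → ℝ)
    (hρ1 : ∀ x x', ρ 1 x' x = if x' = x then 1 else 0)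
    (hρ : ∀ h, 1 ≤ h → ∀ x x',
      ρ (h + 1) x' x = ∑ z, ρ h z x * P z (π h z) x') :
    ∀ x, β 1 x - V 1 x
      = ∑ h ∈ Finset.Icc 1 H, ∑ x', ρ h x' x *
          (CB h x' (π h x')
            + ∑ y, (Phat x' (π h x') y - P x' (π h x') y) * β (h + 1) y) := by
  intro x
  -- one-step decomposition
  have step : ∀ h, 1 ≤ h → h ≤ H →
      ∑ x', ρ h x' x * (β h x' - V h x')
      = (∑ x', ρ h x' x * (CB h x' (π h x')
          + ∑ y, (Phat x' (π h x') y - P x' (π h x') y) * β (h + 1) y))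
        + ∑ y, ρ (h + 1) y x * (β (h + 1) y - V (h + 1) y) := by
    intro h h1 hHh
    have hdiff : ∀ x', β h x' - V h x'
        = (CB h x' (π h x')
            + ∑ y, (Phat x' (π h x') y - P x' (π h x') y) * β (h + 1) y)
          + ∑ y, P x' (π h x') y * (β (h + 1) y - V (h + 1) y) := by
      intro x'
      rw [hβ h h1 hHh, hV h h1 hHh]
      simp only [sub_mul, mul_sub, Finset.sum_sub_distrib]
      ring
    calc ∑ x', ρ h x' x * (β h x' - V h x')
        = (∑ x', ρ h x' x * (CB h x' (π h x')
            + ∑ y, (Phat x' (π h x') y - P x' (π h x') y) * β (h + 1) y))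
          + ∑ x', ρ h x' x * ∑ y, P x' (π h x') y * (β (h + 1) y - V (h + 1) y) := by
          rw [← Finset.sum_add_distrib]
          refine Finset.sum_congr rfl fun x' _ => ?_
          rw [hdiff x', mul_add]
      _ = (∑ x', ρ h x' x * (CB h x' (π h x')
            + ∑ y, (Phat x' (π h x') y - P x' (π h x') y) * β (h + 1) y))
          + ∑ y, ρ (h + 1) y x * (β (h + 1) y - V (h + 1) y) := by
          congr 1
          have : ∀ x' : S, ρ h x' x * ∑ y, P x' (π h x') y * (β (h + 1) y - V (h + 1) y)
              = ∑ y, ρ h x' x * P x' (π h x') y * (β (h + 1) y - V (h + 1) y) := by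
            intro x'; rw [Finset.mul_sum]; exact Finset.sum_congr rfl fun y _ => by ring
          simp_rw [this]
          rw [Finset.sum_comm]
          refine Finset.sum_congr rfl fun y _ => ?_
          rw [hρ h h1 x y, Finset.sum_mul]
  -- telescoping by induction on k, going from stage H+1-k to H
  have key : ∀ k, k ≤ H →
      ∑ x', ρ (H + 1 - k) x' x * (β (H + 1 - k) x' - V (H + 1 - k) x')
      = ∑ h ∈ Finset.Icc (H + 1 - k) H, ∑ x', ρ h x' x *
          (CB h x' (π h x')
            + ∑ y, (Phat x' (π h x') y - P x' (π h x') y) * β (h + 1) y) := by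
    intro k
    induction k with
    | zero =>
        intro _
        simp [hβtop, hVtop]
    | succ k ih =>
        intro hk
        have hk' : k ≤ H := Nat.le_of_succ_le hk
        have h1 : H + 1 - (k + 1) = H - k := by omega
        have h2 : (H - k) + 1 = H + 1 - k := by omega
        have hle1 : 1 ≤ H - k := by omega
        have hleH : H - k ≤ H := by omega
        rw [h1]
        have := step (H - k) hle1 hleH
        rw [h2] at this
        rw [this, ih hk']
        have hIcc : Finset.Icc (H - k) H = insert (H - k) (Finset.Icc (H + 1 - k) H) := by
          rw [← h2]
          ext n
          simp only [Finset.mem_Icc, Finset.mem_insert]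
          omega
        rw [hIcc, Finset.sum_insert (by simp; omega), h2]
  have hk := key H (le_refl H)
  have h1 : H + 1 - H = 1 := by omega
  rw [h1] at hk
  rw [← hk]
  rw [Finset.sum_congr rfl (fun x' _ => by rw [hρ1 x x'])]
  simp
end

section
/- For episodes t = 1,…,K, let π_t = (π_{1,t},…,π_{H,t}) be policies, P̂_t transition functions, CB_{h,t} : S×A → ℝ functions, and let β_t be defined by β_{H+1,t} = 0 and β_{h,t}(x) = r(x,π_{h,t}(x)) + CB_{h,t}(x,π_{h,t}(x)) + Σ_{y∈S} P̂_t(y|x,π_{h,t}(x)) β_{h+1,t}(y). Suppose optimism holds in each episode: β_{1,t}(x) ≥ V*_1(x) for all x ∈ S and all t, where V* is the optimal value function under the true transition function P. Then the (expected) regret satisfies Σ_{t=1}^K Σ_{x∈S} α(x) ( V*_1(x) − V^{π_t}_1(x) ) ≤ Σ_{t=1}^K Σ_{h=1}^H Σ_{x'∈S} ρ_{h,t}(x') · [ CB_{h,t}(x',π_{h,t}(x')) + Σ_{y∈S} ( P̂_t(y|x',π_{h,t}(x')) − P(y|x',π_{h,t}(x')) ) β_{h+1,t}(y) ], where ρ_{h,t}(x')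 is the probability that the state at stage h equals x' when x_1 ∼ α and the process evolves under P and policy π_t. -/
open Finset

/-- Generic regret bound for optimistic algorithms: if in every episode the
optimistic value function `β_t` dominates `V*₁`, then the expected regret is bounded by
the cumulative (visit-weighted) bonuses plus model-deviation terms. -/
theorem stmt_16 {S A : Type*} [Fintype S] [Fintype A] [Nonempty S] [Nonempty A]
    (H K : ℕ) (hH : 1 ≤ H) (hK : 1 ≤ K)
    (α : S → ℝ) (hα0 : ∀ x, 0 ≤ α x) (hα1 : ∑ x, α x = 1)
    (r : S → A → ℝ) (hr : ∀ x a, 0 ≤ r x a ∧ r x a ≤ 1)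
    (P : S → A → S → ℝ) (hP0 : ∀ x a y, 0 ≤ P x a y) (hP1 : ∀ x a, ∑ y, P x a y = 1)
    (π : ℕ → ℕ → S → A)
    (Phat : ℕ → S → A → S → ℝ)
    (hPhat0 : ∀ t x a y, 0 ≤ Phat t x a y) (hPhat1 : ∀ t x a, ∑ y, Phat t x a y = 1)
    (CB : ℕ → ℕ → S → A → ℝ)
    (β : ℕ → ℕ → S → ℝ)
    (hβtop : ∀ t, 1 ≤ t → t ≤ K → ∀ x, β t (H + 1) x = 0)
    (hβ : ∀ t, 1 ≤ t → t ≤ K → ∀ h, 1 ≤ h → h ≤ H → ∀ x,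
      β t h x = r x (π t h x) + CB t h x (π t h x)
        + ∑ y, Phat t x (π t h x) y * β t (h + 1) y)
    (V : ℕ → ℕ → S → ℝ)
    (hVtop : ∀ t, 1 ≤ t → t ≤ K → ∀ x, V t (H + 1) x = 0)
    (hV : ∀ t, 1 ≤ t → t ≤ K → ∀ h, 1 ≤ h → h ≤ H → ∀ x,
      V t h x = r x (π t h x) + ∑ y, P x (π t h x) y * V t (h + 1) y)
    (Vstar : ℕ → S → ℝ)
    (hVstartop : ∀ x, Vstar (H + 1) x = 0)
    (hVstar : ∀ h, 1 ≤ h → h ≤ H → ∀ x,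
      Vstar h x = (Finset.univ : Finset A).sup' Finset.univ_nonempty
        (fun a => r x a + ∑ y, P x a y * Vstar (h + 1) y))
    -- optimism in every episode:
    (hopt : ∀ t, 1 ≤ t → t ≤ K → ∀ x, Vstar 1 x ≤ β t 1 x)
    (ρ : ℕ → ℕ → S → ℝ)
    (hρ1 : ∀ t, 1 ≤ t → t ≤ K → ∀ x', ρ t 1 x' = α x')
    (hρ : ∀ t, 1 ≤ t → t ≤ K → ∀ h, 1 ≤ h → ∀ x',
      ρ t (h + 1) x' = ∑ z, ρ t h z * P z (π t h z) x') :
    ∑ t ∈ Finset.Icc 1 K, ∑ x, α x * (Vstar 1 x - V t 1 x)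
      ≤ ∑ t ∈ Finset.Icc 1 K, ∑ h ∈ Finset.Icc 1 H, ∑ x', ρ t h x' *
          (CB t h x' (π t h x')
            + ∑ y, (Phat t x' (π t h x') y - P x' (π t h x') y) * β t (h + 1) y) := by

  have key : ∀ t, 1 ≤ t → t ≤ K → ∀ n, n ≤ H →
      ∑ x, ρ t (H + 1 - n) x * (β t (H + 1 - n) x - V t (H + 1 - n) x)
        = ∑ h ∈ Finset.Icc (H + 1 - n) H, ∑ x', ρ t h x' *
            (CB t h x' (π t h x')
              + ∑ y, (Phat t x' (π t h x') y - P x' (π t h x') y) * β t (h + 1) y) := by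
    intro t ht1 htK n
    induction n with
    | zero =>
      intro _
      have he : Finset.Icc (H + 1 - 0) H = (∅ : Finset ℕ) := by
        apply Finset.Icc_eq_empty; omega
      simp [hβtop t ht1 htK, hVtop t ht1 htK, he]
    | succ n ih =>
      intro hn
      have hn' : n ≤ H := by omega
      have h1 : H + 1 - (n + 1) = H - n := by omega
      set h := H - n with hh
      have hh1 : 1 ≤ h := by omega
      have hhH : h ≤ H := by omega
      have hsucc : h + 1 = H + 1 - n := by omega
      rw [h1]
      have expand : ∀ x, β t h x - V t h x
          = (CB t h x (π t h x)
              + ∑ y, (Phat t x (π t h x) y - P x (π t h x) y) * β t (h + 1) y)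
            + ∑ y, P x (π t h x) y * (β t (h + 1) y - V t (h + 1) y) := by
        intro x
        rw [hβ t ht1 htK h hh1 hhH x, hV t ht1 htK h hh1 hhH x]
        simp only [sub_mul, mul_sub, Finset.sum_sub_distrib]
        ring
      have step1 : ∑ x, ρ t h x * (β t h x - V t h x)
          = (∑ x', ρ t h x' * (CB t h x' (π t h x')
              + ∑ y, (Phat t x' (π t h x') y - P x' (π t h x') y) * β t (h + 1) y))
            + ∑ y, ρ t (h + 1) y * (β t (h + 1) y - V t (h + 1) y) := by
        have swap : ∑ x, ρ t h x * ∑ y, P x (π t h x) y * (β t (h + 1) y - V t (h + 1) y)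
            = ∑ y, ρ t (h + 1) y * (β t (h + 1) y - V t (h + 1) y) := by
          simp_rw [Finset.mul_sum, ← mul_assoc]
          rw [Finset.sum_comm]
          refine Finset.sum_congr rfl fun y _ => ?_
          rw [hρ t ht1 htK h hh1 y, Finset.sum_mul]
        calc ∑ x, ρ t h x * (β t h x - V t h x)
            = ∑ x, (ρ t h x * (CB t h x (π t h x)
                + ∑ y, (Phat t x (π t h x) y - P x (π t h x) y) * β t (h + 1) y)
              + ρ t h x * ∑ y, P x (π t h x) y * (β t (h + 1) y - V t (h + 1) y)) := by
              refine Finset.sum_congr rfl fun x _ => ?_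
              rw [expand x]; ring
          _ = _ := by rw [Finset.sum_add_distrib, swap]
      rw [step1, hsucc, ih hn']
      have hins : Finset.Icc h H = insert h (Finset.Icc (h + 1) H) := by
        ext m
        simp only [Finset.mem_Icc, Finset.mem_insert]
        omega
      rw [hins, Finset.sum_insert (by simp), hsucc]
  have main : ∀ t ∈ Finset.Icc 1 K,
      ∑ x, α x * (Vstar 1 x - V t 1 x)
        ≤ ∑ h ∈ Finset.Icc 1 H, ∑ x', ρ t h x' *
            (CB t h x' (π t h x')
              + ∑ y, (Phat t x' (π t h x') y - P x' (π t h x') y) * β t (h + 1) y) := by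
    intro t ht
    simp only [Finset.mem_Icc] at ht
    obtain ⟨ht1, htK⟩ := ht
    have hk := key t ht1 htK H le_rfl
    have h11 : H + 1 - H = 1 := by omega
    rw [h11] at hk
    calc ∑ x, α x * (Vstar 1 x - V t 1 x)
        ≤ ∑ x, α x * (β t 1 x - V t 1 x) := by
          refine Finset.sum_le_sum fun x _ => ?_
          have := hopt t ht1 htK x
          nlinarith [hα0 x]
      _ = ∑ x, ρ t 1 x * (β t 1 x - V t 1 x) := by
          refine Finset.sum_congr rfl fun x _ => ?_
          rw [hρ1 t ht1 htK x]
      _ = _ := hk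
  exact Finset.sum_le_sum main
end

section
/- Let π be a policy, P the true transition function, P̂ a reference transition function, and ε : S×A → ℝ≥0 such that Σ_{y∈S} |P̂(y|x,a) − P(y|x,a)| ≤ ε(x,a) for all (x,a). Let β be defined by β_{H+1} = 0 and β_h(x) = r(x,π_h(x)) + CB_h(x,π_h(x)) + Σ_{y∈S} P̂(y|x,π_h(x)) β_{h+1}(y), where CB_h(x,a) = (ε(x,a)/2)·( max_{x'} β_{h+1}(x') − min_{x'} β_{h+1}(x') ) is the UCRL2 bonus, and suppose 0 ≤ β_{h}(x) ≤ H for all h and x. Then for every x ∈ S: β_1(x) − V^π_1(x) ≤ 2H · Σ_{h=1}^H Σ_{x'∈S} ρ_h(x'|x) · ε(x', π_h(x')), where ρ_h(·|x) are the stage-h state-visit probabilities of policy π under P started from x. -/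
open Finset

/-- For the UCRL2-style bonus `CB_h(x,a) = (ε(x,a)/2)·span(β_{h+1})`, if the
model deviation satisfies the ℓ₁ bound `∑_y |P̂ − P| ≤ ε` and `0 ≤ β_h ≤ H`, then the
optimism gap is at most `2H` times the cumulative visit-weighted widths. -/
theorem stmt_17 {S A : Type*} [Fintype S] [Nonempty S] [DecidableEq S]
    (H : ℕ) (hH : 1 ≤ H)
    (r : S → A → ℝ) (hr : ∀ x a, 0 ≤ r x a ∧ r x a ≤ 1)
    (π : ℕ → S → A) (P Phat : S → A → S → ℝ)
    (hP0 : ∀ x a y, 0 ≤ P x a y) (hP1 : ∀ x a, ∑ y, P x a y = 1)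
    (hPhat0 : ∀ x a y, 0 ≤ Phat x a y) (hPhat1 : ∀ x a, ∑ y, Phat x a y = 1)
    (ε : S → A → ℝ) (hε0 : ∀ x a, 0 ≤ ε x a)
    (hεP : ∀ x a, ∑ y, |Phat x a y - P x a y| ≤ ε x a)
    (β V : ℕ → S → ℝ)
    (hβtop : ∀ x, β (H + 1) x = 0)
    (hβ : ∀ h, 1 ≤ h → h ≤ H → ∀ x,
      β h x = r x (π h x)
        + ε x (π h x) / 2 *
            ((Finset.univ : Finset S).sup' Finset.univ_nonempty (β (h + 1))
              - (Finset.univ : Finset S).inf' Finset.univ_nonempty (β (h + 1)))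
        + ∑ y, Phat x (π h x) y * β (h + 1) y)
    (hβbd : ∀ h, 1 ≤ h → h ≤ H + 1 → ∀ x, 0 ≤ β h x ∧ β h x ≤ (H : ℝ))
    (hVtop : ∀ x, V (H + 1) x = 0)
    (hV : ∀ h, 1 ≤ h → h ≤ H → ∀ x,
      V h x = r x (π h x) + ∑ y, P x (π h x) y * V (h + 1) y)
    (ρ : ℕ → S → S → ℝ)
    (hρ1 : ∀ x x', ρ 1 x' x = if x' = x then 1 else 0)
    (hρ : ∀ h, 1 ≤ h → ∀ x x',
      ρ (h + 1) x' x = ∑ z, ρ h z x * P z (π h z) x') :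
    ∀ x, β 1 x - V 1 x
      ≤ 2 * (H : ℝ) * ∑ h ∈ Finset.Icc 1 H, ∑ x', ρ h x' x * ε x' (π h x') := by

  intro x
  -- ρ is nonnegative
  have hρ0 : ∀ h, 1 ≤ h → ∀ x', 0 ≤ ρ h x' x := by
    intro h
    induction h with
    | zero => intro h0; exact absurd h0 (by omega)
    | succ n ih =>
      intro _ x'
      rcases Nat.eq_zero_or_pos n with hn | hn
      · subst hn
        rw [hρ1]
        split <;> norm_num
      · rw [hρ n hn]
        exact Finset.sum_nonneg fun z _ => mul_nonneg (ih hn z) (hP0 _ _ _)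
  -- one-step bound
  have step : ∀ h, 1 ≤ h → h ≤ H → ∀ z,
      β h z - V h z ≤ 2 * (H:ℝ) * ε z (π h z)
        + ∑ y, P z (π h z) y * (β (h+1) y - V (h+1) y) := by
    intro h h1 hhH z
    have hb : ∀ y, 0 ≤ β (h+1) y ∧ β (h+1) y ≤ (H:ℝ) :=
      fun y => hβbd (h+1) (by omega) (by omega) y
    have hsup : (univ : Finset S).sup' Finset.univ_nonempty (β (h+1)) ≤ (H:ℝ) :=
      Finset.sup'_le _ _ fun y _ => (hb y).2
    have hinf : (0:ℝ) ≤ (univ : Finset S).inf' Finset.univ_nonempty (β (h+1)) :=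
      Finset.le_inf' _ _ fun y _ => (hb y).1
    have hdev : ∑ y, (Phat z (π h z) y - P z (π h z) y) * β (h+1) y
        ≤ ε z (π h z) * H := by
      calc ∑ y, (Phat z (π h z) y - P z (π h z) y) * β (h+1) y
          ≤ ∑ y, |Phat z (π h z) y - P z (π h z) y| * (H:ℝ) := by
            apply Finset.sum_le_sum
            intro y _
            calc (Phat z (π h z) y - P z (π h z) y) * β (h+1) y
                ≤ |Phat z (π h z) y - P z (π h z) y| * β (h+1) y :=
                  mul_le_mul_of_nonneg_right (le_abs_self _) (hb y).1
              _ ≤ |Phat z (π h z) y - P z (π h z) y| * (H:ℝ) :=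
                  mul_le_mul_of_nonneg_left (hb y).2 (abs_nonneg _)
        _ = (∑ y, |Phat z (π h z) y - P z (π h z) y|) * (H:ℝ) := by
            rw [Finset.sum_mul]
        _ ≤ ε z (π h z) * H :=
            mul_le_mul_of_nonneg_right (hεP _ _) (Nat.cast_nonneg H)
    have expand : ∑ y, Phat z (π h z) y * β (h+1) y
        = (∑ y, (Phat z (π h z) y - P z (π h z) y) * β (h+1) y)
          + ∑ y, P z (π h z) y * β (h+1) y := by
      rw [← Finset.sum_add_distrib]
      exact Finset.sum_congr rfl fun y _ => by ring
    have key : ∑ y, P z (π h z) y * (β (h+1) y - V (h+1) y)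
        = (∑ y, P z (π h z) y * β (h+1) y) - ∑ y, P z (π h z) y * V (h+1) y := by
      rw [← Finset.sum_sub_distrib]
      exact Finset.sum_congr rfl fun y _ => by ring
    have hCB : ε z (π h z) / 2 *
        ((univ : Finset S).sup' Finset.univ_nonempty (β (h+1))
          - (univ : Finset S).inf' Finset.univ_nonempty (β (h+1)))
        ≤ ε z (π h z) / 2 * (H:ℝ) := by
      apply mul_le_mul_of_nonneg_left (by linarith) (by linarith [hε0 z (π h z)])
    have hεH : 0 ≤ ε z (π h z) * H :=
      mul_nonneg (hε0 z (π h z)) (Nat.cast_nonneg H)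
    rw [hβ h h1 hhH z, hV h h1 hhH z]
    linarith
  -- main induction
  have main : ∀ n h, 1 ≤ h → h + n = H + 1 →
      ∑ x', ρ h x' x * (β h x' - V h x')
        ≤ 2 * (H:ℝ) * ∑ k ∈ Finset.Icc h H, ∑ x', ρ k x' x * ε x' (π k x') := by
    intro n
    induction n with
    | zero =>
      intro h h1 hn
      have hh : h = H + 1 := by omega
      subst hh
      have : Finset.Icc (H+1) H = (∅ : Finset ℕ) := by
        apply Finset.Icc_eq_empty; omega
      simp [hβtop, hVtop, this]
    | succ n ih =>
      intro h h1 hn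
      have hhH : h ≤ H := by omega
      have step1 : ∑ x', ρ h x' x * (β h x' - V h x')
          ≤ ∑ x', ρ h x' x * (2*(H:ℝ)*ε x' (π h x')
              + ∑ y, P x' (π h x') y * (β (h+1) y - V (h+1) y)) :=
        Finset.sum_le_sum fun x' _ =>
          mul_le_mul_of_nonneg_left (step h h1 hhH x') (hρ0 h h1 x')
      have step2 : ∑ x', ρ h x' x * ∑ y, P x' (π h x') y * (β (h+1) y - V (h+1) y)
          = ∑ y, ρ (h+1) y x * (β (h+1) y - V (h+1) y) := by
        simp_rw [Finset.mul_sum, ← mul_assoc]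
        rw [Finset.sum_comm]
        simp_rw [← Finset.sum_mul]
        exact Finset.sum_congr rfl fun y _ => by rw [hρ h h1 x y]
      have step3 : ∑ x', ρ h x' x * (2*(H:ℝ)*ε x' (π h x')
              + ∑ y, P x' (π h x') y * (β (h+1) y - V (h+1) y))
          = 2*(H:ℝ) * (∑ x', ρ h x' x * ε x' (π h x'))
            + ∑ y, ρ (h+1) y x * (β (h+1) y - V (h+1) y) := by
        rw [← step2, Finset.mul_sum, ← Finset.sum_add_distrib]
        exact Finset.sum_congr rfl fun x' _ => by ring
      have ihh := ih (h+1) (by omega) (by omega)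
      have hicc : Finset.Icc h H = insert h (Finset.Icc (h+1) H) := by
        ext k
        simp only [Finset.mem_Icc, Finset.mem_insert]
        omega
      have hnotmem : h ∉ Finset.Icc (h+1) H := by simp
      rw [hicc, Finset.sum_insert hnotmem]
      calc ∑ x', ρ h x' x * (β h x' - V h x')
          ≤ 2*(H:ℝ) * (∑ x', ρ h x' x * ε x' (π h x'))
            + ∑ y, ρ (h+1) y x * (β (h+1) y - V (h+1) y) := by
            rw [← step3]; exact step1
        _ ≤ 2*(H:ℝ) * (∑ x', ρ h x' x * ε x' (π h x'))
            + 2*(H:ℝ) * ∑ k ∈ Finset.Icc (h+1) H, ∑ x', ρ k x' x * ε x' (π k x') := by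
            linarith
        _ = 2*(H:ℝ) * ((∑ x', ρ h x' x * ε x' (π h x'))
            + ∑ k ∈ Finset.Icc (h+1) H, ∑ x', ρ k x' x * ε x' (π k x')) := by ring
  have start : β 1 x - V 1 x = ∑ x', ρ 1 x' x * (β 1 x' - V 1 x') := by
    simp only [hρ1, ite_mul, one_mul, zero_mul]
    rw [Finset.sum_ite_eq' Finset.univ x (fun x' => β 1 x' - V 1 x')]
    simp
  rw [start]
  exact main H 1 (le_refl 1) (by omega)
end

section
/- Let Z be a finite set of cardinality m ≥ 1, let n ≥ 1, and let z_1,…,z_n be any sequence of elements of Z. For t = 1,…,n let N_t(z) = #{ s < t : z_s = z } be the number of occurrences of z strictly before time t. Then Σ_{t=1}^n 1 / sqrt( max(N_t(z_t), 1) ) ≤ 3 Σ_{z∈Z} sqrt( N_{n+1}(z) ) ≤ 3 sqrt( m·n ). -/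
open Finset

lemma rank_sum (g : ℕ → ℝ) (S : Finset ℕ) :
    ∑ t ∈ S, g ((S.filter (fun s => s < t)).card) = ∑ k ∈ Finset.range S.card, g k := by
  induction S using Finset.induction_on_max with
  | empty => simp
  | insert a s ha ih =>
    have has : a ∉ s := fun h => lt_irrefl a (ha a h)
    rw [Finset.sum_insert has, Finset.card_insert_of_notMem has, Finset.sum_range_succ]
    have h1 : (Finset.filter (fun s_1 => s_1 < a) (insert a s)).card = s.card := by
      congr 1
      rw [Finset.filter_insert, if_neg (lt_irrefl a)]
      exact Finset.filter_true_of_mem (fun b hb => ha b hb)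
    have h2 : ∀ t ∈ s, (Finset.filter (fun s_1 => s_1 < t) (insert a s)).card
        = (Finset.filter (fun s_1 => s_1 < t) s).card := by
      intro t ht
      rw [Finset.filter_insert, if_neg (by exact not_lt.2 (ha t ht).le)]
    rw [h1, Finset.sum_congr rfl (fun t ht => by rw [h2 t ht]), ih]
    ring

lemma sum_bound (K : ℕ) :
    ∑ k ∈ Finset.range K, 1 / Real.sqrt ((max k 1 : ℕ) : ℝ) ≤ 3 * Real.sqrt K := by
  induction K with
  | zero => simp
  | succ K ih =>
    rw [Finset.sum_range_succ]
    have key : 1 / Real.sqrt ((max K 1 : ℕ) : ℝ) ≤ 3 * Real.sqrt (K + 1) - 3 * Real.sqrt K := by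
      rcases Nat.eq_zero_or_pos K with h0 | hK
      · subst h0; simp
      · have hmax : (max K 1) = K := max_eq_left hK
        rw [hmax]
        set a := Real.sqrt K with hadef
        set b := Real.sqrt (K + 1) with hbdef
        have ha2 : a ^ 2 = K := Real.sq_sqrt (by positivity)
        have hb2 : b ^ 2 = (K : ℝ) + 1 := by
          rw [hbdef]; rw [Real.sq_sqrt (by positivity)]
        have ha1 : 1 ≤ a := by
          rw [hadef, show (1:ℝ) = Real.sqrt 1 by simp]
          exact Real.sqrt_le_sqrt (by exact_mod_cast hK)
        have hba : a ≤ b := Real.sqrt_le_sqrt (by linarith)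
        have hb0 : 0 ≤ b := Real.sqrt_nonneg _
        rw [div_le_iff₀ (by linarith)]
        nlinarith [mul_nonneg (sub_nonneg.2 hba) (by nlinarith : (0:ℝ) ≤ 2*a - b)]
    have hcast : ((K + 1 : ℕ) : ℝ) = (K : ℝ) + 1 := by push_cast; ring
    rw [hcast] at *
    linarith

/-- Pigeonhole bound for cumulative `1/√N_t` widths: for any sequence
`z_1,…,z_n` in a finite set `Z` of cardinality `m`, with `N_t(z)` the number of
occurrences of `z` strictly before time `t`,
`∑_t 1/√(max(N_t(z_t),1)) ≤ 3 ∑_z √(N_{n+1}(z)) ≤ 3 √(m n)`. -/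
theorem stmt_18 {Z : Type*} [Fintype Z] [DecidableEq Z] [Nonempty Z]
    (n : ℕ) (hn : 1 ≤ n) (z : ℕ → Z) :
    (∑ t ∈ Finset.Icc 1 n,
        1 / Real.sqrt ((max ((Finset.Ico 1 t).filter (fun s => z s = z t)).card 1 : ℕ) : ℝ)
      ≤ 3 * ∑ c : Z,
          Real.sqrt ((((Finset.Ico 1 (n + 1)).filter (fun s => z s = c)).card : ℝ))) ∧
    3 * (∑ c : Z,
        Real.sqrt ((((Finset.Ico 1 (n + 1)).filter (fun s => z s = c)).card : ℝ)))
      ≤ 3 * Real.sqrt ((Fintype.card Z : ℝ) * (n : ℝ)) := by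
  have hIcoIcc : Finset.Ico 1 (n + 1) = Finset.Icc 1 n := Finset.Ico_add_one_right_eq_Icc 1 n
  constructor
  · -- part 1
    have hfib : ∑ t ∈ Finset.Icc 1 n,
        1 / Real.sqrt ((max ((Finset.Ico 1 t).filter (fun s => z s = z t)).card 1 : ℕ) : ℝ)
        = ∑ c : Z, ∑ t ∈ (Finset.Icc 1 n).filter (fun t => z t = c),
        1 / Real.sqrt ((max ((Finset.Ico 1 t).filter (fun s => z s = z t)).card 1 : ℕ) : ℝ) := by
      rw [← Finset.sum_fiberwise_of_maps_to (fun t _ => Finset.mem_univ (z t))]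
    rw [hfib, Finset.mul_sum]
    apply Finset.sum_le_sum
    intro c _
    set S := (Finset.Icc 1 n).filter (fun t => z t = c) with hSdef
    have hSfilter : ∀ t ∈ S, (Finset.Ico 1 t).filter (fun s => z s = z t)
        = S.filter (fun s => s < t) := by
      intro t ht
      rw [Finset.mem_filter, Finset.mem_Icc] at ht
      ext s
      simp only [Finset.mem_filter, Finset.mem_Ico, Finset.mem_Icc, hSdef, ht.2]
      constructor
      · rintro ⟨⟨h1, h2⟩, h3⟩; exact ⟨⟨⟨h1, by omega⟩, h3⟩, h2⟩
      · rintro ⟨⟨⟨h1, _⟩, h3⟩, h2⟩; exact ⟨⟨h1, h2⟩, h3⟩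
    calc ∑ t ∈ S, 1 / Real.sqrt ((max ((Finset.Ico 1 t).filter (fun s => z s = z t)).card 1 : ℕ) : ℝ)
        = ∑ t ∈ S, 1 / Real.sqrt ((max ((S.filter (fun s => s < t)).card) 1 : ℕ) : ℝ) := by
          apply Finset.sum_congr rfl
          intro t ht; rw [hSfilter t ht]
      _ = ∑ k ∈ Finset.range S.card, 1 / Real.sqrt ((max k 1 : ℕ) : ℝ) :=
          rank_sum (fun k => 1 / Real.sqrt ((max k 1 : ℕ) : ℝ)) S
      _ ≤ 3 * Real.sqrt S.card := sum_bound S.card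
      _ = 3 * Real.sqrt ((((Finset.Ico 1 (n + 1)).filter (fun s => z s = c)).card : ℝ)) := by
          rw [hIcoIcc]
  · -- part 2
    have hm : 0 < Fintype.card Z := Fintype.card_pos
    have hsum : ∑ c : Z, ((((Finset.Ico 1 (n + 1)).filter (fun s => z s = c)).card : ℝ)) = n := by
      rw [← Nat.cast_sum]
      norm_cast
      rw [← Finset.card_eq_sum_card_fiberwise (fun s _ => Finset.mem_univ (z s))]
      simp
    set T := ∑ c : Z, Real.sqrt ((((Finset.Ico 1 (n + 1)).filter (fun s => z s = c)).card : ℝ))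
      with hTdef
    have hT0 : 0 ≤ T := Finset.sum_nonneg fun c _ => Real.sqrt_nonneg _
    have hsq : T ^ 2 ≤ (Fintype.card Z : ℝ) * n := by
      calc T ^ 2 ≤ (Finset.univ : Finset Z).card *
            ∑ c : Z, Real.sqrt ((((Finset.Ico 1 (n + 1)).filter (fun s => z s = c)).card : ℝ)) ^ 2 := by
            exact sq_sum_le_card_mul_sum_sq
        _ = (Fintype.card Z : ℝ) * n := by
            rw [Finset.card_univ]
            congr 1
            rw [← hsum]
            apply Finset.sum_congr rfl
            intro c _
            exact Real.sq_sqrt (by positivity)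
    have := (Real.le_sqrt hT0 (by positivity)).2 hsq
    linarith
end
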